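/- Let r₁ ≥ 2 and r₂ ≥ 1, and let H be the complete split graph obtained as the join of the complete graph K_{r₂} with the empty graph (coclique) on r₁ vertices. Then the characteristic polynomial of the eccentricity matrix ε(H) equals (x+2)^{r₁−1}·(x+1)^{r₂−1}·(x² − (2r₁ + r₂ − 3)x + r₁r₂ − 2r₁ − 2r₂ + 2). -/

import Mathlib

open Finset Polynomial

noncomputable def ecc {V : Type*} [Fintype V] (G : SimpleGraph V) (u : V) : ℕ :=
  Finset.univ.sup (G.dist u)

noncomputable def eccMatrix {V : Type*} [Fintype V] (G : SimpleGraph V) :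
    Matrix V V ℝ := fun u v =>
  if G.dist u v = min (ecc G u) (ecc G v) then (G.dist u v : ℝ) else 0

theorem eccMatrix_isHermitian {V : Type*} [Fintype V] (G : SimpleGraph V) :
    (eccMatrix G).IsHermitian := by
  unfold Matrix.IsHermitian
  ext u v
  simp only [Matrix.conjTranspose_apply, eccMatrix, star_trivial]
  rw [SimpleGraph.dist_comm, min_comm]

/-- Number of positive eigenvalues (with multiplicity) of a real symmetric matrix. -/
noncomputable def posEigCount {V : Type*} [Fintype V] [DecidableEq V]
    {A : Matrix V V ℝ} (hA : A.IsHermitian) : ℕ :=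
  (Finset.univ.filter fun i => 0 < hA.eigenvalues i).card

/-- The join of two simple graphs: disjoint union plus all edges in between. -/
def graphJoin {α β : Type*} (G : SimpleGraph α) (H : SimpleGraph β) :
    SimpleGraph (α ⊕ β) where
  Adj x y := match x, y with
    | Sum.inl a, Sum.inl b => G.Adj a b
    | Sum.inr a, Sum.inr b => H.Adj a b
    | _, _ => True
  symm := ⟨by rintro (a|a) (b|b) h <;> first | exact G.symm.symm _ _ h | exact H.symm.symm _ _ h | trivial⟩
  loopless := ⟨by rintro (a|a) h <;> first | exact G.loopless.irrefl _ h | exact H.loopless.irrefl _ h⟩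

/-- The disjoint union of two simple graphs. -/
def graphSum {α β : Type*} (G : SimpleGraph α) (H : SimpleGraph β) :
    SimpleGraph (α ⊕ β) where
  Adj x y := match x, y with
    | Sum.inl a, Sum.inl b => G.Adj a b
    | Sum.inr a, Sum.inr b => H.Adj a b
    | _, _ => False
  symm := ⟨by rintro (a|a) (b|b) h <;> first | exact G.symm.symm _ _ h | exact H.symm.symm _ _ h | trivial⟩
  loopless := ⟨by rintro (a|a) h <;> first | exact G.loopless.irrefl _ h | exact H.loopless.irrefl _ h⟩

/-- Disjoint union of blocks indexed by `ι`; block `i` has `r i` vertices and is a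
clique when `P i` holds and a coclique (independent set) otherwise. -/
def blocksGraph {ι : Type*} (r : ι → ℕ) (P : ι → Prop) :
    SimpleGraph (Σ i, Fin (r i)) where
  Adj x y := x ≠ y ∧ x.1 = y.1 ∧ P x.1
  symm := ⟨by rintro x y ⟨h1, h2, h3⟩; exact ⟨h1.symm, h2.symm, h2 ▸ h3⟩⟩
  loopless := ⟨fun x h => h.1 rfl⟩

section aux
variable (r₁ r₂ : ℕ)

private abbrev Gj : SimpleGraph (Fin r₂ ⊕ Fin r₁) :=
  graphJoin (⊤ : SimpleGraph (Fin r₂)) (⊥ : SimpleGraph (Fin r₁))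

variable {r₁ r₂}

private lemma gj_adj_ll {a b : Fin r₂} (h : a ≠ b) : (Gj r₁ r₂).Adj (.inl a) (.inl b) := h
private lemma gj_adj_lr (a : Fin r₂) (b : Fin r₁) : (Gj r₁ r₂).Adj (.inl a) (.inr b) := trivial
private lemma gj_adj_rl (b : Fin r₁) (a : Fin r₂) : (Gj r₁ r₂).Adj (.inr b) (.inl a) := trivial
private lemma gj_not_adj_rr (a b : Fin r₁) : ¬ (Gj r₁ r₂).Adj (.inr a) (.inr b) := fun h => h

private lemma dist_ll {a b : Fin r₂} (h : a ≠ b) : (Gj r₁ r₂).dist (.inl a) (.inl b) = 1 :=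
  SimpleGraph.dist_eq_one_iff_adj.2 (gj_adj_ll h)
private lemma dist_lr (a : Fin r₂) (b : Fin r₁) : (Gj r₁ r₂).dist (.inl a) (.inr b) = 1 :=
  SimpleGraph.dist_eq_one_iff_adj.2 (gj_adj_lr a b)
private lemma dist_rl (b : Fin r₁) (a : Fin r₂) : (Gj r₁ r₂).dist (.inr b) (.inl a) = 1 :=
  SimpleGraph.dist_eq_one_iff_adj.2 (gj_adj_rl b a)

private lemma dist_rr (h2 : 1 ≤ r₂) {a b : Fin r₁} (h : a ≠ b) :
    (Gj r₁ r₂).dist (.inr a) (.inr b) = 2 := by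
  have c : Fin r₂ := ⟨0, h2⟩
  have hle : (Gj r₁ r₂).dist (.inr a) (.inr b) ≤ 2 := by
    simpa using SimpleGraph.dist_le
      (SimpleGraph.Walk.cons (gj_adj_rl a c) (.cons (gj_adj_lr c b) .nil))
  have hreach : (Gj r₁ r₂).Reachable (.inr a) (.inr b) :=
    ⟨.cons (gj_adj_rl a c) (.cons (gj_adj_lr c b) .nil)⟩
  have hne1 : (Gj r₁ r₂).dist (.inr a) (.inr b) ≠ 1 := by
    intro hh
    exact gj_not_adj_rr a b (SimpleGraph.dist_eq_one_iff_adj.1 hh)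
  have hne0 : (Gj r₁ r₂).dist (.inr a) (.inr b) ≠ 0 := by
    intro hh
    rcases SimpleGraph.dist_eq_zero_iff_eq_or_not_reachable.1 hh with h' | h'
    · exact h (by simpa using h')
    · exact h' hreach
  omega

private lemma ecc_l (h1 : 2 ≤ r₁) (a : Fin r₂) : ecc (Gj r₁ r₂) (.inl a) = 1 := by
  refine le_antisymm (Finset.sup_le ?_) ?_
  · rintro (b | b) -
    · rcases eq_or_ne a b with rfl | h
      · simp [SimpleGraph.dist_self]
      · simp [dist_ll h]
    · simp [dist_lr]
  · have : (Gj r₁ r₂).dist (.inl a) (.inr ⟨0, by omega⟩) = 1 := dist_lr a _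
    calc 1 = (Gj r₁ r₂).dist (.inl a) (.inr ⟨0, by omega⟩) := this.symm
    _ ≤ _ := Finset.le_sup (Finset.mem_univ _)

private lemma ecc_r (h1 : 2 ≤ r₁) (h2 : 1 ≤ r₂) (b : Fin r₁) :
    ecc (Gj r₁ r₂) (.inr b) = 2 := by
  obtain ⟨b', hb'⟩ := Fintype.exists_ne_of_one_lt_card (by rw [Fintype.card_fin]; omega) b
  refine le_antisymm (Finset.sup_le ?_) ?_
  · rintro (c | c) -
    · simp [dist_rl]
    · rcases eq_or_ne b c with rfl | h
      · simp [SimpleGraph.dist_self]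
      · simp [dist_rr h2 h]
  · calc 2 = (Gj r₁ r₂).dist (.inr b) (.inr b') := (dist_rr h2 hb'.symm).symm
    _ ≤ _ := Finset.le_sup (Finset.mem_univ _)

end aux

section aux2
variable (r₁ r₂ : ℕ)

private def wR : Fin r₂ ⊕ Fin r₁ → ℝ := Sum.elim (fun _ => 0) (fun _ => 1)

private def Mecc : Matrix (Fin r₂ ⊕ Fin r₁) (Fin r₂ ⊕ Fin r₁) ℝ :=
  Matrix.of (fun x y => 1 + wR r₁ r₂ x * wR r₁ r₂ y) -
    Matrix.diagonal (fun x => 1 + wR r₁ r₂ x)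

variable {r₁ r₂}

private lemma eccMatrix_eq (h1 : 2 ≤ r₁) (h2 : 1 ≤ r₂) :
    eccMatrix (Gj r₁ r₂) = Mecc r₁ r₂ := by
  ext x y
  rcases x with a | a <;> rcases y with b | b
  · rcases eq_or_ne a b with rfl | h
    · simp [eccMatrix, Mecc, wR, SimpleGraph.dist_self, ecc_l h1]
    · simp [eccMatrix, Mecc, wR, dist_ll h, ecc_l h1, Matrix.diagonal_apply, h]
  · simp [eccMatrix, Mecc, wR, dist_lr, ecc_l h1, ecc_r h1 h2, Matrix.diagonal_apply]
  · simp [eccMatrix, Mecc, wR, dist_rl, ecc_l h1, ecc_r h1 h2, Matrix.diagonal_apply]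
  · rcases eq_or_ne a b with rfl | h
    · simp [eccMatrix, Mecc, wR, SimpleGraph.dist_self, ecc_r h1 h2]
    · norm_num [eccMatrix, Mecc, wR, dist_rr h2 h, ecc_r h1 h2, Matrix.diagonal_apply, h]

end aux2

section aux3
variable {r₁ r₂ : ℕ}

private lemma charpoly_field_id {K : Type*} [Field K] (t : K) (a b : ℕ) (ht1 : t + 1 ≠ 0)
    (ht2 : t + 2 ≠ 0) : (t + 1) ^ (b + 1) * (t + 2) ^ (a + 2) *
      ((1 - (((b:K) + 1) * (t + 1)⁻¹ + ((a:K) + 2) * (t + 2)⁻¹)) * (1 - ((a:K) + 2) * (t + 2)⁻¹) -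
        ((a:K) + 2) * (t + 2)⁻¹ * (((a:K) + 2) * (t + 2)⁻¹)) =
    (t + 2) ^ (a + 1) * (t + 1) ^ b *
      (t ^ 2 - (2 * ((a:K) + 2) + ((b:K) + 1) - 3) * t +
        (((a:K) + 2) * ((b:K) + 1) - 2 * ((a:K) + 2) - 2 * ((b:K) + 1) + 2)) := by
  simp only [pow_succ]
  field_simp
  ring

set_option maxHeartbeats 1000000 in
private lemma charpoly_Mecc (h1 : 2 ≤ r₁) (h2 : 1 ≤ r₂) :
    (Mecc r₁ r₂).charpoly =
      (X + C 2) ^ (r₁ - 1) * (X + C 1) ^ (r₂ - 1) *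
        (X ^ 2 - C (2 * (r₁ : ℝ) + (r₂ : ℝ) - 3) * X +
          C ((r₁ : ℝ) * (r₂ : ℝ) - 2 * (r₁ : ℝ) - 2 * (r₂ : ℝ) + 2)) := by
  classical
  set K := FractionRing (Polynomial ℝ) with hK
  let f : Polynomial ℝ →+* K := algebraMap (Polynomial ℝ) K
  have hf : Function.Injective f := IsFractionRing.injective _ _
  apply hf
  let g : ℝ →+* K := f.comp Polynomial.C
  have hfC : ∀ r : ℝ, f (C r) = g r := fun r => rfl
  set t : K := f X with htdef
  have ht1 : t + 1 ≠ 0 := by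
    intro h
    have h0 : (X + C 1 : Polynomial ℝ) ≠ 0 := Polynomial.X_add_C_ne_zero 1
    apply h0; apply hf
    rw [map_add, map_zero, hfC, map_one]
    exact h
  have ht2 : t + 2 ≠ 0 := by
    intro h
    have h0 : (X + C 2 : Polynomial ℝ) ≠ 0 := Polynomial.X_add_C_ne_zero 2
    apply h0; apply hf
    rw [map_add, map_zero, hfC, map_ofNat]
    exact h
  let d : Fin r₂ ⊕ Fin r₁ → K := Sum.elim (fun _ => t + 1) (fun _ => t + 2)
  let wv : Fin r₂ ⊕ Fin r₁ → K := Sum.elim (fun _ => (0 : K)) (fun _ => (1 : K))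
  let W : Matrix (Fin r₂ ⊕ Fin r₁) (Fin 2) K := Matrix.of fun x j => if j = 0 then 1 else wv x
  let Dinv : Matrix (Fin r₂ ⊕ Fin r₁) (Fin r₂ ⊕ Fin r₁) K := Matrix.diagonal fun x => (d x)⁻¹
  have hd : ∀ x, d x ≠ 0 := by
    rintro (x | x)
    · simpa [d] using ht1
    · simpa [d] using ht2
  have hmap : (Matrix.charmatrix (Mecc r₁ r₂)).map f = Matrix.diagonal d - W * W.transpose := by
    ext x y
    rcases eq_or_ne x y with rfl | hxy
    · rw [Matrix.map_apply, Matrix.charmatrix_apply_eq, map_sub, hfC]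
      rcases x with a | a <;>
        simp [Mecc, wR, d, wv, W, Matrix.mul_apply, Fin.sum_univ_two, map_ofNat] <;> ring
    · rw [Matrix.map_apply, Matrix.charmatrix_apply_ne _ _ _ hxy, map_neg, hfC]
      rcases x with a | a <;> rcases y with b | b <;>
        (simp_all [Mecc, wR, d, wv, W, Matrix.mul_apply, Fin.sum_univ_two,
          Matrix.diagonal_apply, map_ofNat]) <;> norm_num
  have hDD : Matrix.diagonal d * Dinv = 1 := by
    rw [show Dinv = Matrix.diagonal fun x => (d x)⁻¹ from rfl, Matrix.diagonal_mul_diagonal,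
      show (fun x => d x * (d x)⁻¹) = fun _ => (1 : K) from funext fun x => mul_inv_cancel₀ (hd x),
      Matrix.diagonal_one]
  have hfactor : Matrix.diagonal d - W * W.transpose =
      Matrix.diagonal d * (1 - Dinv * W * W.transpose) := by
    rw [Matrix.mul_sub, Matrix.mul_one, ← Matrix.mul_assoc, ← Matrix.mul_assoc,
      hDD, Matrix.one_mul]
  have hS : ∀ i j : Fin 2, (W.transpose * (Dinv * W)) i j
      = (if i = 0 ∧ j = 0 then (r₂ : K) * (t+1)⁻¹ else 0) + (r₁ : K) * (t+2)⁻¹ := by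
    intro i j
    rw [Matrix.mul_apply, Fintype.sum_sum_type]
    fin_cases i <;> fin_cases j <;>
      simp [W, wv, d, Dinv, Matrix.diagonal_mul, Finset.sum_const, Finset.card_univ,
        nsmul_eq_mul, Matrix.mul_apply, Matrix.diagonal_apply]
  have hdet2 : (1 - W.transpose * (Dinv * W)).det =
      (1 - ((r₂:K)*(t+1)⁻¹ + (r₁:K)*(t+2)⁻¹)) * (1 - (r₁:K)*(t+2)⁻¹)
        - ((r₁:K)*(t+2)⁻¹) * ((r₁:K)*(t+2)⁻¹) := by
    rw [Matrix.det_fin_two]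
    simp only [Matrix.sub_apply, Matrix.one_apply, hS]
    norm_num
    ring
  have hdetd : (Matrix.diagonal d).det = (t+1)^r₂ * (t+2)^r₁ := by
    rw [Matrix.det_diagonal, Fintype.prod_sum_type]
    simp [d, Finset.prod_const, Finset.card_univ]
  rw [show (Mecc r₁ r₂).charpoly = (Matrix.charmatrix (Mecc r₁ r₂)).det from rfl,
    RingHom.map_det, RingHom.mapMatrix_apply, hmap, hfactor, Matrix.det_mul,
    Matrix.det_one_sub_mul_comm, hdetd, hdet2]
  simp only [map_mul, map_pow, map_add, map_sub, map_one, map_ofNat, hfC, ← htdef,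
    map_natCast]
  obtain ⟨a, rfl⟩ : ∃ a, r₁ = a + 2 := ⟨r₁ - 2, by omega⟩
  obtain ⟨b, rfl⟩ : ∃ b, r₂ = b + 1 := ⟨r₂ - 1, by omega⟩
  simp only [show a + 2 - 1 = a + 1 from rfl, show b + 1 - 1 = b from rfl]
  push_cast
  exact charpoly_field_id t a b ht1 ht2

end aux3

/-- the characteristic polynomial of the eccentricity matrix of the complete
split graph (join of `K_{r₂}` with a coclique of size `r₁`). -/
theorem stmt7 (r₁ r₂ : ℕ) (h1 : 2 ≤ r₁) (h2 : 1 ≤ r₂) :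
    (eccMatrix (graphJoin (⊤ : SimpleGraph (Fin r₂)) (⊥ : SimpleGraph (Fin r₁)))).charpoly =
      (X + C 2) ^ (r₁ - 1) * (X + C 1) ^ (r₂ - 1) *
        (X ^ 2 - C (2 * (r₁ : ℝ) + (r₂ : ℝ) - 3) * X +
          C ((r₁ : ℝ) * (r₂ : ℝ) - 2 * (r₁ : ℝ) - 2 * (r₂ : ℝ) + 2)) := by
  rw [eccMatrix_eq h1 h2, charpoly_Mecc h1 h2]
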